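/- Let R be a commutative ring and r ∈ R. The extended Rees algebra R[t,u]/(tu − r) (graded with deg t = 1, deg u = −1), after inverting u and taking the degree-zero part, yields an R-algebra B such that the localization map R[1/r] → B[1/r] is an isomorphism. -/

import Mathlib

universe u

open MvPolynomial

/-- Let `A = R[t,u]/(tu − r)` with its ℤ-grading (`deg t = 1`, `deg u = −1`), presented as
an `R`-algebra `A` generated by homogeneous elements `t, u` with `tu = r`, with the
presentation ideal exactly `(tu − r)`. Let `B` be the degree-zero part of `A[u⁻¹]`, i.e.
the homogeneous localization of `A` at the powers of `u`. Then `R[1/r] → B[1/r]` is an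
isomorphism: `B[1/(image of r)]` is a localization of `R` away from `r`. -/
theorem stmt_3 (R : Type u) [CommRing R] (r : R)
    (A : Type u) [CommRing A] [Algebra R A]
    (𝒜 : ℤ → Submodule R A) [GradedAlgebra 𝒜]
    (t u : A) (ht : t ∈ 𝒜 1) (hu : u ∈ 𝒜 (-1))
    (htu : t * u = algebraMap R A r)
    (hsurj : Function.Surjective (aeval (R := R) ![t, u] :
      MvPolynomial (Fin 2) R →ₐ[R] A))
    (hker : RingHom.ker (aeval (R := R) ![t, u] : MvPolynomial (Fin 2) R →ₐ[R] A).toRingHom =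
      Ideal.span {(X 0 * X 1 - C r : MvPolynomial (Fin 2) R)})
    (f : R →+* HomogeneousLocalization 𝒜 (Submonoid.powers u))
    (hf : ∀ x : R, (f x).val =
      algebraMap A (Localization (Submonoid.powers u)) (algebraMap R A x)) :
    @IsLocalization.Away R _ r (Localization.Away (f r)) _
      (((algebraMap (HomogeneousLocalization 𝒜 (Submonoid.powers u))
        (Localization.Away (f r))).comp f).toAlgebra) := by
  classical
  -- aeval at monomials
  have haem : ∀ (m : Fin 2 →₀ ℕ) (c : R),
      (aeval (R := R) ![t, u]) (monomial m c) = algebraMap R A c * (t ^ m 0 * u ^ m 1) := by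
    intro m c
    rw [aeval_monomial]
    congr 1
    rw [Finsupp.prod_fintype _ _ (fun i => pow_zero _), Fin.prod_univ_two]
    simp
  -- injectivity of f
  have hinj : Function.Injective f := by
    intro x y hxy
    have hval : (f x).val = (f y).val := by rw [hxy]
    rw [hf, hf] at hval
    obtain ⟨c, hc⟩ := IsLocalization.exists_of_eq (M := Submonoid.powers u) hval
    obtain ⟨m, hm⟩ := c.2
    have hm' : u ^ m = (c : A) := hm
    have hp : (aeval (R := R) ![t, u]) (X 1 ^ m * C (x - y) : MvPolynomial (Fin 2) R) = 0 := by
      have : u ^ m * algebraMap R A x = u ^ m * algebraMap R A y := by rw [hm']; exact hc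
      simp only [map_mul, map_pow, map_sub, aeval_X, aeval_C]
      simp only [Matrix.cons_val_one, Matrix.head_cons, Matrix.cons_val_zero]
      rw [mul_sub, this, sub_self]
    have hmem : (X 1 ^ m * C (x - y) : MvPolynomial (Fin 2) R) ∈
        RingHom.ker (aeval (R := R) ![t, u] : MvPolynomial (Fin 2) R →ₐ[R] A).toRingHom := hp
    rw [hker, Ideal.mem_span_singleton] at hmem
    obtain ⟨q, hq⟩ := hmem
    have h2 := congrArg (aeval (R := R) ![r, (1 : R)]) hq
    simp only [map_mul, map_pow, map_sub, aeval_X, aeval_C, Matrix.cons_val_zero,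
      Matrix.cons_val_one, Matrix.head_cons, Algebra.algebraMap_self_apply, one_pow, one_mul, mul_one,
      sub_self, zero_mul] at h2
    exact sub_eq_zero.mp h2
  -- degree lemma
  have hdeg : ∀ (n : ℕ) (a : A), a ∈ 𝒜 (-(n : ℤ)) → ∃ s : R, a = algebraMap R A s * u ^ n := by
    intro n a ha
    obtain ⟨p, rfl⟩ := hsurj a
    set F : MvPolynomial (Fin 2) R →ₐ[R] A := aeval (R := R) ![t, u] with hF
    have hPmem : ∀ m : Fin 2 →₀ ℕ,
        F (monomial m (coeff m p)) ∈ 𝒜 ((m 0 : ℤ) - (m 1 : ℤ)) := by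
      intro m
      rw [haem]
      have h0 : algebraMap R A (coeff m p) ∈ 𝒜 0 := SetLike.algebraMap_mem_graded 𝒜 _
      have h1 : t ^ m 0 ∈ 𝒜 ((m 0 : ℤ)) := by
        simpa using SetLike.pow_mem_graded (m 0) ht
      have h2 : u ^ m 1 ∈ 𝒜 (-(m 1 : ℤ)) := by
        simpa using SetLike.pow_mem_graded (m 1) hu
      have := SetLike.mul_mem_graded h0 (SetLike.mul_mem_graded h1 h2)
      convert this using 2
      ring
    have hsum : F p = ∑ m ∈ p.support, F (monomial m (coeff m p)) := by
      conv_lhs => rw [p.as_sum]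
      rw [map_sum]
    have hcomp : F p = ∑ m ∈ p.support,
        if ((m 0 : ℤ) - (m 1 : ℤ)) = -(n : ℤ) then F (monomial m (coeff m p)) else 0 := by
      have h1 : ((DirectSum.decompose 𝒜 (F p)) (-(n : ℤ)) : A) = F p := by
        rw [DirectSum.decompose_of_mem_same 𝒜 ha]
      have h2 : DirectSum.decompose 𝒜 (F p) = ∑ m ∈ p.support,
          DirectSum.of (fun i => 𝒜 i) ((m 0 : ℤ) - (m 1 : ℤ))
            ⟨F (monomial m (coeff m p)), hPmem m⟩ := by
        conv_lhs => rw [hsum]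
        rw [DirectSum.decompose_sum]
        exact Finset.sum_congr rfl fun m _ => DirectSum.decompose_of_mem 𝒜 (hPmem m)
      rw [← h1, h2, DFinsupp.finset_sum_apply, AddSubmonoidClass.coe_finset_sum]
      refine Finset.sum_congr rfl fun m _ => ?_
      rw [DirectSum.coe_of_apply (A := 𝒜)]
      split <;> rfl
    refine ⟨∑ m ∈ p.support, if ((m 0 : ℤ) - (m 1 : ℤ)) = -(n : ℤ)
      then coeff m p * r ^ m 0 else 0, ?_⟩
    rw [hcomp, map_sum, Finset.sum_mul]
    refine Finset.sum_congr rfl fun m _ => ?_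
    by_cases hm : ((m 0 : ℤ) - (m 1 : ℤ)) = -(n : ℤ)
    · rw [if_pos hm, if_pos hm, haem]
      have hmn : m 1 = m 0 + n := by omega
      rw [hmn, pow_add, ← mul_assoc (t ^ m 0), ← mul_pow, htu, ← map_pow, map_mul, mul_assoc]
    · rw [if_neg hm, if_neg hm, map_zero, zero_mul]
  -- surjectivity of f
  have hfsurj : Function.Surjective f := by
    intro b
    obtain ⟨⟨i, ⟨num, hnum⟩, ⟨den, hden⟩, hdenmem⟩, rfl⟩ := HomogeneousLocalization.mk_surjective b
    obtain ⟨m, hm⟩ := hdenmem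
    have hm' : u ^ m = den := hm
    by_cases hi : i = -(m : ℤ)
    · obtain ⟨s, hs⟩ := hdeg m num (hi ▸ hnum)
      refine ⟨s, ?_⟩
      apply HomogeneousLocalization.val_injective
      rw [HomogeneousLocalization.val_mk, hf]
      rw [Localization.mk_eq_mk', IsLocalization.eq_mk'_iff_mul_eq, ← map_mul]
      exact congrArg (algebraMap A (Localization (Submonoid.powers u)))
        (show algebraMap R A s * den = num by rw [hs, hm'])
    · -- then `den = 0` and `B` is a subsingleton
      have humem : u ^ m ∈ 𝒜 (-(m : ℤ)) := by
        simpa using SetLike.pow_mem_graded m hu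
      have hzero : den = 0 := by
        have h1 : ((DirectSum.decompose 𝒜 den) i : A) = den :=
          by rw [DirectSum.decompose_of_mem_same 𝒜 hden]
        have h2 : ((DirectSum.decompose 𝒜 den) i : A) = 0 := by
          rw [← hm', DirectSum.decompose_of_mem_ne 𝒜 humem (fun h => hi h.symm)]
        rw [← h1, h2]
      have : Subsingleton (HomogeneousLocalization 𝒜 (Submonoid.powers u)) :=
        HomogeneousLocalization.subsingleton 𝒜 ⟨m, hm'.trans hzero⟩
      exact ⟨0, Subsingleton.elim _ _⟩
  -- assemble
  letI : Algebra R (Localization.Away (f r)) :=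
    (((algebraMap (HomogeneousLocalization 𝒜 (Submonoid.powers u))
        (Localization.Away (f r))).comp f)).toAlgebra
  have halg : ∀ x : R, algebraMap R (Localization.Away (f r)) x =
      algebraMap (HomogeneousLocalization 𝒜 (Submonoid.powers u))
        (Localization.Away (f r)) (f x) := fun _ => rfl
  refine ⟨?_, ?_, ?_⟩
  · rintro ⟨y, n, rfl⟩
    have hy : algebraMap R (Localization.Away (f r)) (r ^ n) =
        algebraMap (HomogeneousLocalization 𝒜 (Submonoid.powers u))
          (Localization.Away (f r)) ((f r) ^ n) := by
      rw [halg, map_pow]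
    rw [hy]
    exact IsLocalization.map_units (M := Submonoid.powers (f r)) _ ⟨(f r) ^ n, n, rfl⟩
  · intro z
    obtain ⟨⟨b, c⟩, hb⟩ := IsLocalization.surj (M := Submonoid.powers (f r)) z
    obtain ⟨n, hn⟩ := c.2
    obtain ⟨s, rfl⟩ := hfsurj b
    refine ⟨⟨s, ⟨r ^ n, n, rfl⟩⟩, ?_⟩
    rw [halg, halg, map_pow]
    simpa [← hn] using hb
  · intro x y hxy
    rw [halg, halg] at hxy
    obtain ⟨c, hc⟩ := IsLocalization.exists_of_eq (M := Submonoid.powers (f r)) hxy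
    obtain ⟨n, hn⟩ := c.2
    refine ⟨⟨r ^ n, n, rfl⟩, ?_⟩
    apply hinj
    rw [map_mul, map_mul, map_pow]
    rw [← hn] at hc
    exact hc
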